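/- The composed linear order ≺ = ≺₂ ∘ ≺₁ on E(G₂ ∘ G₁) is admissible: for every inner vertex v of G = G₂ ∘ G₁, the input edges of G avoid the convex hull of O(v) and the output edges of G avoid the convex hull of I(v). -/
import Mathlib


/-- A progressive graph: a directed (multi)graph with sources `s`, targets `t`, and
a distinguished boundary set `σ` of vertices. -/
structure PGraph where
  V : Type
  E : Type
  s : E → V
  t : E → V
  σ : Set V

namespace PGraph

variable (G : PGraph)

/-- One edge can be followed by another. -/
def step (e f : G.E) : Prop := G.t e = G.s f

/-- The reachable order: a directed path starts with `e₁` and ends with `e₂`. -/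
def reach : G.E → G.E → Prop := Relation.ReflTransGen G.step

/-- No directed cycles. -/
def Acyclic : Prop := ∀ e, ¬ Relation.TransGen G.step e e

/-- Incoming edges of a vertex. -/
def I (v : G.V) : Set G.E := {e | G.t e = v}

/-- Outgoing edges of a vertex. -/
def O (v : G.V) : Set G.E := {e | G.s e = v}

/-- An input edge: it starts at a boundary vertex. -/
def InputEdge (e : G.E) : Prop := G.s e ∈ G.σ

/-- An output edge: it ends at a boundary vertex. -/
def OutputEdge (e : G.E) : Prop := G.t e ∈ G.σ

/-- An inner vertex. -/
def Inner (v : G.V) : Prop := v ∉ G.σ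

/-- An input vertex: a boundary vertex which is a source. -/
def InputVertex (v : G.V) : Prop := v ∈ G.σ ∧ ∃ e, G.s e = v

/-- An output vertex: a boundary vertex which is a sink. -/
def OutputVertex (v : G.V) : Prop := v ∈ G.σ ∧ ∃ e, G.t e = v

/-- The boundary consists of leaves: every boundary vertex has exactly one
incident edge-end. -/
def Progressive : Prop := ∀ v ∈ G.σ, ∃! e : G.E, G.s e = v ∨ G.t e = v

/-- The reflexive closure of a strict order on edges. -/
def le (lt : G.E → G.E → Prop) (a b : G.E) : Prop := lt a b ∨ a = b

/-- The convex hull of a set of edges with respect to a linear order `lt`. -/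
def conv (lt : G.E → G.E → Prop) (X : Set G.E) : Set G.E :=
  {y | ∃ a ∈ X, ∃ b ∈ X, G.le lt a y ∧ G.le lt y b}

/-- (Q₁): the reachable order implies the linear order. -/
def Q1 (lt : G.E → G.E → Prop) : Prop :=
  ∀ e₁ e₂, G.reach e₁ e₂ → G.le lt e₁ e₂

/-- (Q₂), the nesting condition. -/
def Q2 (lt : G.E → G.E → Prop) : Prop :=
  ∀ e₁ e e₂ : G.E, lt e₁ e → lt e e₂ →
    (G.t e₁ = G.t e₂ → G.I (G.t e) ⊆ G.conv lt (G.I (G.t e₁))) ∧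
    (G.s e₁ = G.s e₂ → G.O (G.s e) ⊆ G.conv lt (G.O (G.s e₁))) ∧
    (G.t e₁ = G.s e₂ →
      G.I (G.t e) ⊆ G.conv lt (G.I (G.t e₁)) ∨ G.O (G.s e) ⊆ G.conv lt (G.O (G.s e₂)))

/-- An upward planar order: a linear (strict total) order on edges satisfying
(Q₁) and the nesting condition (Q₂). -/
def UPO (lt : G.E → G.E → Prop) : Prop :=
  IsStrictTotalOrder G.E lt ∧ G.Q1 lt ∧ G.Q2 lt

/-- Admissibility: for every inner vertex `v`, input edges avoid `conv (O v)` and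
output edges avoid `conv (I v)`. -/
def Admissible (lt : G.E → G.E → Prop) : Prop :=
  ∀ v : G.V, G.Inner v →
    (∀ e, G.InputEdge e → e ∉ G.conv lt (G.O v)) ∧
    (∀ e, G.OutputEdge e → e ∉ G.conv lt (G.I v))

end PGraph

/-- Data exhibiting `G` as the composite `G₂ ∘ G₁` of two progressive graphs:
the edges of `G₁` and `G₂` embed into those of `G` via `j₁`, `j₂`, overlapping
exactly on the output edges of `G₁`, identified with the input edges of `G₂`;
the removed boundary vertices are the output vertices of `G₁` and the input
vertices of `G₂`, and the boundary of `G` is the union of the input vertices of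
`G₁` and the output vertices of `G₂`. -/
structure CompData (G₁ G₂ G : PGraph) where
  j₁ : G₁.E → G.E
  j₂ : G₂.E → G.E
  k₁ : G₁.V → G.V
  k₂ : G₂.V → G.V
  inj₁ : Function.Injective j₁
  inj₂ : Function.Injective j₂
  coverE : ∀ e : G.E, (∃ a, j₁ a = e) ∨ (∃ b, j₂ b = e)
  glue : ∀ a b, j₁ a = j₂ b → G₁.OutputEdge a ∧ G₂.InputEdge b
  glueOut : ∀ a, G₁.OutputEdge a → ∃ b, G₂.InputEdge b ∧ j₁ a = j₂ b
  glueIn : ∀ b, G₂.InputEdge b → ∃ a, G₁.OutputEdge a ∧ j₁ a = j₂ b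
  src₁ : ∀ a, G.s (j₁ a) = k₁ (G₁.s a)
  tgt₁ : ∀ a, ¬ G₁.OutputEdge a → G.t (j₁ a) = k₁ (G₁.t a)
  tgt₂ : ∀ b, G.t (j₂ b) = k₂ (G₂.t b)
  src₂ : ∀ b, ¬ G₂.InputEdge b → G.s (j₂ b) = k₂ (G₂.s b)
  injV₁ : ∀ v w, ¬ G₁.OutputVertex v → ¬ G₁.OutputVertex w → k₁ v = k₁ w → v = w
  injV₂ : ∀ v w, ¬ G₂.InputVertex v → ¬ G₂.InputVertex w → k₂ v = k₂ w → v = w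
  disjV : ∀ v w, ¬ G₁.OutputVertex v → ¬ G₂.InputVertex w → k₁ v ≠ k₂ w
  coverV : ∀ u : G.V,
    (∃ v, ¬ G₁.OutputVertex v ∧ k₁ v = u) ∨ (∃ w, ¬ G₂.InputVertex w ∧ k₂ w = u)
  bdry : ∀ u : G.V,
    u ∈ G.σ ↔ (∃ v, G₁.InputVertex v ∧ k₁ v = u) ∨ (∃ w, G₂.OutputVertex w ∧ k₂ w = u)

/-- `lt` is the shuffle-style composed linear order `lt₂ ∘ lt₁` on the edges of the
composite: it restricts to `lt₁` on `E(G₁)` and to `lt₂` on `E(G₂)`, and an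
unidentified edge of `G₁` precedes an unidentified edge of `G₂` iff some identified
edge `ē = j₁ o = j₂ i` lies weakly between them. -/
def IsCompOrder {G₁ G₂ G : PGraph} (C : CompData G₁ G₂ G)
    (lt₁ : G₁.E → G₁.E → Prop) (lt₂ : G₂.E → G₂.E → Prop)
    (lt : G.E → G.E → Prop) : Prop :=
  (∀ a a', lt₁ a a' ↔ lt (C.j₁ a) (C.j₁ a')) ∧
  (∀ b b', lt₂ b b' ↔ lt (C.j₂ b) (C.j₂ b')) ∧
  (∀ a b, (∀ b', C.j₁ a ≠ C.j₂ b') → (∀ a', C.j₂ b ≠ C.j₁ a') →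
    (lt (C.j₁ a) (C.j₂ b) ↔
      ∃ o i, C.j₁ o = C.j₂ i ∧ G₁.le lt₁ a o ∧ G₂.le lt₂ i b))

namespace PGraph

/-- In a progressive acyclic graph, the source of an edge is never an output vertex. -/
lemma source_not_outputVertex (G : PGraph) (hP : G.Progressive) (hA : G.Acyclic)
    (e : G.E) : ¬ G.OutputVertex (G.s e) := by
  rintro ⟨hσ, f, hf⟩
  obtain ⟨e', -, huniq⟩ := hP _ hσ
  have h1 : e = e' := huniq e (Or.inl rfl)
  have h2 : f = e' := huniq f (Or.inr hf)
  have hfe : f = e := h2.trans h1.symm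
  exact hA e (Relation.TransGen.single (show G.t e = G.s e from hfe ▸ hf))

/-- In a progressive acyclic graph, the target of an edge is never an input vertex. -/
lemma target_not_inputVertex (G : PGraph) (hP : G.Progressive) (hA : G.Acyclic)
    (e : G.E) : ¬ G.InputVertex (G.t e) := by
  rintro ⟨hσ, f, hf⟩
  obtain ⟨e', -, huniq⟩ := hP _ hσ
  have h1 : e = e' := huniq e (Or.inr rfl)
  have h2 : f = e' := huniq f (Or.inl hf)
  have hfe : f = e := h2.trans h1.symm
  exact hA e (Relation.TransGen.single (show G.t e = G.s e from (hfe ▸ hf : G.s e = G.t e).symm))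

end PGraph

/-- The composed linear order is admissible: for every inner vertex `v` of the
composite, input edges avoid `conv (O v)` and output edges avoid `conv (I v)`. -/
theorem comp_admissible (G₁ G₂ G : PGraph)
    [Fintype G₁.E] [Fintype G₂.E] [Fintype G.E]
    (lt₁ : G₁.E → G₁.E → Prop) (lt₂ : G₂.E → G₂.E → Prop) (lt : G.E → G.E → Prop)
    (hP₁ : G₁.Progressive) (hA₁ : G₁.Acyclic) (hU₁ : G₁.UPO lt₁) (hAd₁ : G₁.Admissible lt₁)
    (hP₂ : G₂.Progressive) (hA₂ : G₂.Acyclic) (hU₂ : G₂.UPO lt₂) (hAd₂ : G₂.Admissible lt₂)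
    (C : CompData G₁ G₂ G) (hst : IsStrictTotalOrder G.E lt)
    (hC : IsCompOrder C lt₁ lt₂ lt) :
    G.Admissible lt := by
  haveI := hst
  haveI := hU₁.1
  haveI := hU₂.1
  obtain ⟨hC1, hC2, hC3⟩ := hC
  obtain ⟨hst₁, hQ1₁, hQ2₁⟩ := hU₁
  obtain ⟨hst₂, hQ1₂, hQ2₂⟩ := hU₂
  have sNO₁ : ∀ a : G₁.E, ¬ G₁.OutputVertex (G₁.s a) :=
    fun a => G₁.source_not_outputVertex hP₁ hA₁ a
  have tNI₁ : ∀ a : G₁.E, ¬ G₁.InputVertex (G₁.t a) :=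
    fun a => G₁.target_not_inputVertex hP₁ hA₁ a
  have sNO₂ : ∀ b : G₂.E, ¬ G₂.OutputVertex (G₂.s b) :=
    fun b => G₂.source_not_outputVertex hP₂ hA₂ b
  have tNI₂ : ∀ b : G₂.E, ¬ G₂.InputVertex (G₂.t b) :=
    fun b => G₂.target_not_inputVertex hP₂ hA₂ b
  have asym : ∀ x y : G.E, lt x y → ¬ lt y x := by
    intro x y h h'
    exact absurd (trans_of lt h h') (irrefl_of lt x)
  -- translation of the reflexive closures
  have leJ₁ : ∀ x y : G₁.E, G.le lt (C.j₁ x) (C.j₁ y) → G₁.le lt₁ x y := by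
    rintro x y (h | h)
    · exact Or.inl ((hC1 x y).2 h)
    · exact Or.inr (C.inj₁ h)
  have leJ₂ : ∀ x y : G₂.E, G.le lt (C.j₂ x) (C.j₂ y) → G₂.le lt₂ x y := by
    rintro x y (h | h)
    · exact Or.inl ((hC2 x y).2 h)
    · exact Or.inr (C.inj₂ h)
  -- input edges of G come from input edges of G₁
  have preJ₁ : ∀ e : G.E, G.InputEdge e → ∃ a, C.j₁ a = e ∧ G₁.InputEdge a := by
    intro e he
    have hkey : ∀ a, C.j₁ a = e → G₁.InputEdge a := by
      intro a ha
      have hs : C.k₁ (G₁.s a) ∈ G.σ := by rw [← C.src₁, ha]; exact he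
      rcases (C.bdry _).1 hs with ⟨u, hu, hku⟩ | ⟨u, hu, hku⟩
      · obtain ⟨huσ, f, hf⟩ := hu
        have hno : ¬ G₁.OutputVertex u := hf ▸ sNO₁ f
        have heq : u = G₁.s a := C.injV₁ u (G₁.s a) hno (sNO₁ a) hku
        exact (heq ▸ huσ : G₁.s a ∈ G₁.σ)
      · obtain ⟨huσ, f, hf⟩ := hu
        have hni : ¬ G₂.InputVertex u := hf ▸ tNI₂ f
        exact absurd hku.symm (C.disjV (G₁.s a) u (sNO₁ a) hni)
    rcases C.coverE e with ⟨a, ha⟩ | ⟨b, hb⟩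
    · exact ⟨a, ha, hkey a ha⟩
    · by_cases hbi : G₂.InputEdge b
      · obtain ⟨a, -, hab⟩ := C.glueIn b hbi
        exact ⟨a, hab.trans hb, hkey a (hab.trans hb)⟩
      · exfalso
        have hs : C.k₂ (G₂.s b) ∈ G.σ := by rw [← C.src₂ b hbi, hb]; exact he
        rcases (C.bdry _).1 hs with ⟨u, hu, hku⟩ | ⟨u, hu, hku⟩
        · obtain ⟨huσ, f, hf⟩ := hu
          have hno : ¬ G₁.OutputVertex u := hf ▸ sNO₁ f
          exact absurd hku (C.disjV u (G₂.s b) hno (fun h => hbi h.1))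
        · obtain ⟨huσ, f, hf⟩ := hu
          have hni : ¬ G₂.InputVertex u := hf ▸ tNI₂ f
          have heq : u = G₂.s b := C.injV₂ u (G₂.s b) hni (fun h => hbi h.1) hku
          exact sNO₂ b (heq ▸ ⟨huσ, f, hf⟩)
  -- output edges of G come from output edges of G₂
  have preJ₂ : ∀ e : G.E, G.OutputEdge e → ∃ b, C.j₂ b = e ∧ G₂.OutputEdge b := by
    intro e he
    have hkey : ∀ b, C.j₂ b = e → G₂.OutputEdge b := by
      intro b hb
      have ht : C.k₂ (G₂.t b) ∈ G.σ := by rw [← C.tgt₂, hb]; exact he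
      rcases (C.bdry _).1 ht with ⟨u, hu, hku⟩ | ⟨u, hu, hku⟩
      · obtain ⟨huσ, f, hf⟩ := hu
        have hno : ¬ G₁.OutputVertex u := hf ▸ sNO₁ f
        exact absurd hku (C.disjV u (G₂.t b) hno (tNI₂ b))
      · obtain ⟨huσ, f, hf⟩ := hu
        have hni : ¬ G₂.InputVertex u := hf ▸ tNI₂ f
        have heq : u = G₂.t b := C.injV₂ u (G₂.t b) hni (tNI₂ b) hku
        exact (heq ▸ huσ : G₂.t b ∈ G₂.σ)
    rcases C.coverE e with ⟨a, ha⟩ | ⟨b, hb⟩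
    · by_cases hao : G₁.OutputEdge a
      · obtain ⟨b, -, hab⟩ := C.glueOut a hao
        exact ⟨b, hab.symm.trans ha, hkey b (hab.symm.trans ha)⟩
      · exfalso
        have ht : C.k₁ (G₁.t a) ∈ G.σ := by rw [← C.tgt₁ a hao, ha]; exact he
        have hnoa : ¬ G₁.OutputVertex (G₁.t a) := fun h => hao h.1
        rcases (C.bdry _).1 ht with ⟨u, hu, hku⟩ | ⟨u, hu, hku⟩
        · obtain ⟨huσ, f, hf⟩ := hu
          have hno : ¬ G₁.OutputVertex u := hf ▸ sNO₁ f
          have heq : u = G₁.t a := C.injV₁ u (G₁.t a) hno hnoa hku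
          exact tNI₁ a (heq ▸ ⟨huσ, f, hf⟩)
        · obtain ⟨huσ, f, hf⟩ := hu
          have hni : ¬ G₂.InputVertex u := hf ▸ tNI₂ f
          exact absurd hku.symm (C.disjV (G₁.t a) u hnoa hni)
    · exact ⟨b, hb, hkey b hb⟩
  intro v hv
  rcases C.coverV v with ⟨w, hw, rfl⟩ | ⟨w, hw, rfl⟩
  · -- v = k₁ w, w an inner vertex of G₁
    have winner : w ∉ G₁.σ := by
      intro hσ
      obtain ⟨f, hf, -⟩ := hP₁ w hσ
      rcases hf with hf | hf
      · exact hv ((C.bdry _).2 (Or.inl ⟨w, ⟨hσ, f, hf⟩, rfl⟩))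
      · exact hw ⟨hσ, f, hf⟩
    have hOv : G.O (C.k₁ w) = C.j₁ '' G₁.O w := by
      ext e
      constructor
      · intro hse
        have hse : G.s e = C.k₁ w := hse
        have hkey : ∀ a, C.j₁ a = e → e ∈ C.j₁ '' G₁.O w := by
          intro a ha
          refine ⟨a, ?_, ha⟩
          have heq : C.k₁ (G₁.s a) = C.k₁ w := by rw [← C.src₁, ha, hse]
          exact C.injV₁ _ _ (sNO₁ a) hw heq
        rcases C.coverE e with ⟨a, ha⟩ | ⟨b, hb⟩
        · exact hkey a ha
        · by_cases hbi : G₂.InputEdge b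
          · obtain ⟨a, -, hab⟩ := C.glueIn b hbi
            exact hkey a (hab.trans hb)
          · exfalso
            have heq : C.k₂ (G₂.s b) = C.k₁ w := by rw [← C.src₂ b hbi, hb, hse]
            exact C.disjV w (G₂.s b) hw (fun h => hbi h.1) heq.symm
      · rintro ⟨a, ha, rfl⟩
        have ha : G₁.s a = w := ha
        show G.s (C.j₁ a) = C.k₁ w
        rw [C.src₁, ha]
    have hIv : G.I (C.k₁ w) = C.j₁ '' G₁.I w := by
      ext e
      constructor
      · intro hte
        have hte : G.t e = C.k₁ w := hte
        have hkey2 : ∀ b, C.j₂ b = e → False := by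
          intro b hb
          have heq : C.k₂ (G₂.t b) = C.k₁ w := by rw [← C.tgt₂, hb, hte]
          exact C.disjV w (G₂.t b) hw (tNI₂ b) heq.symm
        rcases C.coverE e with ⟨a, ha⟩ | ⟨b, hb⟩
        · by_cases hao : G₁.OutputEdge a
          · obtain ⟨b, -, hab⟩ := C.glueOut a hao
            exact absurd (hab.symm.trans ha) (fun h => hkey2 b h)
          · refine ⟨a, ?_, ha⟩
            have heq : C.k₁ (G₁.t a) = C.k₁ w := by rw [← C.tgt₁ a hao, ha, hte]
            exact C.injV₁ _ _ (fun h => hao h.1) hw heq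
        · exact (hkey2 b hb).elim
      · rintro ⟨a, ha, rfl⟩
        have ha : G₁.t a = w := ha
        have hao : ¬ G₁.OutputEdge a := fun h => winner (ha ▸ h)
        show G.t (C.j₁ a) = C.k₁ w
        rw [C.tgt₁ a hao, ha]
    refine ⟨?_, ?_⟩
    · intro e he hconv
      obtain ⟨a, rfl, hain⟩ := preJ₁ e he
      rw [hOv] at hconv
      obtain ⟨x', ⟨x, hx, rfl⟩, y', ⟨y, hy, rfl⟩, h1, h2⟩ := hconv
      exact (hAd₁ w winner).1 a hain ⟨x, hx, y, hy, leJ₁ x a h1, leJ₁ a y h2⟩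
    · intro e he hconv
      obtain ⟨b, rfl, hbout⟩ := preJ₂ e he
      rw [hIv] at hconv
      obtain ⟨x', ⟨x, hx, rfl⟩, y', ⟨y, hy, rfl⟩, h1, h2⟩ := hconv
      have hx : G₁.t x = w := hx
      have hy : G₁.t y = w := hy
      have hxo : ¬ G₁.OutputEdge x := fun h => winner (hx ▸ h)
      have hyo : ¬ G₁.OutputEdge y := fun h => winner (hy ▸ h)
      have hxne : ∀ b', C.j₁ x ≠ C.j₂ b' := fun b' h => hxo (C.glue x b' h).1
      have hyne : ∀ b', C.j₁ y ≠ C.j₂ b' := fun b' h => hyo (C.glue y b' h).1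
      by_cases hba : ∃ a', C.j₂ b = C.j₁ a'
      · obtain ⟨a', ha'⟩ := hba
        have hout : G₁.OutputEdge a' := (C.glue a' b ha'.symm).1
        rw [ha'] at h1 h2
        exact (hAd₁ w winner).2 a' hout ⟨x, hx, y, hy, leJ₁ x a' h1, leJ₁ a' y h2⟩
      · push_neg at hba
        have hlt1 : lt (C.j₁ x) (C.j₂ b) := by
          rcases h1 with h | h
          · exact h
          · exact absurd h (hxne b)
        have hlt2 : lt (C.j₂ b) (C.j₁ y) := by
          rcases h2 with h | h
          · exact h
          · exact absurd h.symm (hyne b)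
        obtain ⟨o, i, hoi, hxle, hib⟩ := (hC3 x b hxne hba).1 hlt1
        have hnyb : ¬ lt (C.j₁ y) (C.j₂ b) := asym _ _ hlt2
        have hoy : lt₁ o y := by
          rcases trichotomous_of lt₁ y o with h | h | h
          · exact absurd ((hC3 y b hyne hba).2 ⟨o, i, hoi, Or.inl h, hib⟩) hnyb
          · exact absurd ((hC3 y b hyne hba).2 ⟨o, i, hoi, Or.inr h, hib⟩) hnyb
          · exact h
        exact (hAd₁ w winner).2 o (C.glue o i hoi).1 ⟨x, hx, y, hy, hxle, Or.inl hoy⟩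
  · -- v = k₂ w, w an inner vertex of G₂
    have winner : w ∉ G₂.σ := by
      intro hσ
      obtain ⟨f, hf, -⟩ := hP₂ w hσ
      rcases hf with hf | hf
      · exact hw ⟨hσ, f, hf⟩
      · exact hv ((C.bdry _).2 (Or.inr ⟨w, ⟨hσ, f, hf⟩, rfl⟩))
    have hOv : G.O (C.k₂ w) = C.j₂ '' G₂.O w := by
      ext e
      constructor
      · intro hse
        have hse : G.s e = C.k₂ w := hse
        rcases C.coverE e with ⟨a, ha⟩ | ⟨b, hb⟩
        · exfalso
          have heq : C.k₁ (G₁.s a) = C.k₂ w := by rw [← C.src₁, ha, hse]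
          exact C.disjV _ w (sNO₁ a) hw heq
        · by_cases hbi : G₂.InputEdge b
          · exfalso
            obtain ⟨a, -, hab⟩ := C.glueIn b hbi
            have heq : C.k₁ (G₁.s a) = C.k₂ w := by rw [← C.src₁, hab, hb, hse]
            exact C.disjV _ w (sNO₁ a) hw heq
          · exact ⟨b, C.injV₂ _ _ (fun h => hbi h.1) hw
              (by rw [← C.src₂ b hbi, hb, hse]), hb⟩
      · rintro ⟨b, hbw, rfl⟩
        have hbw : G₂.s b = w := hbw
        have hbi : ¬ G₂.InputEdge b := fun h => winner (hbw ▸ h)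
        show G.s (C.j₂ b) = C.k₂ w
        rw [C.src₂ b hbi, hbw]
    have hIv : G.I (C.k₂ w) = C.j₂ '' G₂.I w := by
      ext e
      constructor
      · intro hte
        have hte : G.t e = C.k₂ w := hte
        have hkey : ∀ b, C.j₂ b = e → e ∈ C.j₂ '' G₂.I w := by
          intro b hb
          refine ⟨b, ?_, hb⟩
          have heq : C.k₂ (G₂.t b) = C.k₂ w := by rw [← C.tgt₂, hb, hte]
          exact C.injV₂ _ _ (tNI₂ b) hw heq
        rcases C.coverE e with ⟨a, ha⟩ | ⟨b, hb⟩
        · by_cases hao : G₁.OutputEdge a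
          · obtain ⟨b, -, hab⟩ := C.glueOut a hao
            exact hkey b (hab.symm.trans ha)
          · exfalso
            have heq : C.k₁ (G₁.t a) = C.k₂ w := by rw [← C.tgt₁ a hao, ha, hte]
            exact C.disjV _ w (fun h => hao h.1) hw heq
        · exact hkey b hb
      · rintro ⟨b, hbw, rfl⟩
        have hbw : G₂.t b = w := hbw
        show G.t (C.j₂ b) = C.k₂ w
        rw [C.tgt₂, hbw]
    refine ⟨?_, ?_⟩
    · intro e he hconv
      obtain ⟨a, rfl, hain⟩ := preJ₁ e he
      rw [hOv] at hconv
      obtain ⟨x', ⟨x, hx, rfl⟩, y', ⟨y, hy, rfl⟩, h1, h2⟩ := hconv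
      have hx : G₂.s x = w := hx
      have hy : G₂.s y = w := hy
      have hxi : ¬ G₂.InputEdge x := fun h => winner (hx ▸ h)
      have hyi : ¬ G₂.InputEdge y := fun h => winner (hy ▸ h)
      have hxne : ∀ a', C.j₂ x ≠ C.j₁ a' := fun a' h => hxi (C.glue a' x h.symm).2
      have hyne : ∀ a', C.j₂ y ≠ C.j₁ a' := fun a' h => hyi (C.glue a' y h.symm).2
      by_cases hab : ∃ b', C.j₁ a = C.j₂ b'
      · obtain ⟨b', hb'⟩ := hab
        have hin : G₂.InputEdge b' := (C.glue a b' hb').2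
        rw [hb'] at h1 h2
        exact (hAd₂ w winner).1 b' hin ⟨x, hx, y, hy, leJ₂ x b' h1, leJ₂ b' y h2⟩
      · push_neg at hab
        have hlt1 : lt (C.j₂ x) (C.j₁ a) := by
          rcases h1 with h | h
          · exact h
          · exact absurd h.symm (hab x)
        have hlt2 : lt (C.j₁ a) (C.j₂ y) := by
          rcases h2 with h | h
          · exact h
          · exact absurd h (hab y)
        obtain ⟨o, i, hoi, hao, hiy⟩ := (hC3 a y hab hyne).1 hlt2
        have hnax : ¬ lt (C.j₁ a) (C.j₂ x) := asym _ _ hlt1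
        have hxi' : lt₂ x i := by
          rcases trichotomous_of lt₂ i x with h | h | h
          · exact absurd ((hC3 a x hab hxne).2 ⟨o, i, hoi, hao, Or.inl h⟩) hnax
          · exact absurd ((hC3 a x hab hxne).2 ⟨o, i, hoi, hao, Or.inr h⟩) hnax
          · exact h
        exact (hAd₂ w winner).1 i (C.glue o i hoi).2 ⟨x, hx, y, hy, Or.inl hxi', hiy⟩
    · intro e he hconv
      obtain ⟨b, rfl, hbout⟩ := preJ₂ e he
      rw [hIv] at hconv
      obtain ⟨x', ⟨x, hx, rfl⟩, y', ⟨y, hy, rfl⟩, h1, h2⟩ := hconv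
      exact (hAd₂ w winner).2 b hbout ⟨x, hx, y, hy, leJ₂ x b h1, leJ₂ b y h2⟩
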